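/- For every integer d ≥ 2, every ε ∈ (0,1), and every sufficiently large n with ε^{-d} ≤ c·n, there exists an n-point ultrametric space of doubling dimension at most d for which every (1+ε)-spanner has lightness Ω(ε^{-(d+1)}), where lightness is the ratio of the spanner's total edge weight to the MST weight. -/

import Mathlib

/-- The weight of a path (list of vertices): the sum of the weights of its
consecutive pairs, where the weight of a pair is its metric distance. -/
def pathWeight {X : Type*} (dX : X → X → ℝ) : List X → ℝ
  | [] => 0
  | [_] => 0
  | a :: b :: l => dX a b + pathWeight dX (b :: l)

/-- `G = (X,E)` (edge weights = distances) is a `t`-spanner of `(X,dX)`: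
every pair is joined by a path in `G` of weight at most `t` times its distance. -/
def IsSpanner {X : Type*} (dX : X → X → ℝ) (E : X → X → Prop) (t : ℝ) : Prop :=
  ∀ u v : X, ∃ p : List X, p.Chain' E ∧ p.head? = some u ∧ p.getLast? = some v ∧
    pathWeight dX p ≤ t * dX u v

open Classical in
/-- The total weight of the graph `(X,E)` with edge weights equal to distances
(each ordered pair counted once after dividing by 2). -/
noncomputable def graphWeight {X : Type*} [Fintype X] (dX : X → X → ℝ)
    (E : X → X → Prop) : ℝ :=
  (∑ u, ∑ v, if E u v then dX u v else 0) / 2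

namespace Stmt13Aux

/-- digit `s` (from the most significant, `0`-indexed) of `a` in base `q`, `ℓ` digits total. -/
def dig (q ℓ a s : ℕ) : ℕ := a / q ^ (ℓ - 1 - s) % q

/-- cluster of point `j` among `m` clusters over `n` points. -/
def Af (m n j : ℕ) : ℕ := j * m / n

/-- the symbol sequence of point `j`. -/
def phi (q ℓ m n j s : ℕ) : ℕ :=
  if s < ℓ then dig q ℓ (Af m n j) s else if s - ℓ < j then 1 else if s - ℓ = j then 2 else 0

lemma phi_exists {q ℓ m n : ℕ} {u v : ℕ} (h : u ≠ v) :
    ∃ s, phi q ℓ m n u s ≠ phi q ℓ m n v s := by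
  rcases Nat.lt_or_ge u v with hlt | hge
  · exact ⟨ℓ + u, by simp [phi, Nat.add_sub_cancel_left, hlt]⟩
  · have hlt : v < u := lt_of_le_of_ne hge (Ne.symm h)
    exact ⟨ℓ + v, by simp [phi, Nat.add_sub_cancel_left, hlt]⟩

/-- index of first difference of the symbol sequences. -/
noncomputable def fd (q ℓ m n u v : ℕ) : ℕ :=
  sInf {s | phi q ℓ m n u s ≠ phi q ℓ m n v s}

lemma fd_mem {q ℓ m n u v : ℕ} (h : u ≠ v) :
    phi q ℓ m n u (fd q ℓ m n u v) ≠ phi q ℓ m n v (fd q ℓ m n u v) :=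
  Nat.sInf_mem (s := {s | phi q ℓ m n u s ≠ phi q ℓ m n v s})
    (phi_exists (q := q) (ℓ := ℓ) (m := m) (n := n) h)

lemma fd_spec {q ℓ m n u v s : ℕ} (h : s < fd q ℓ m n u v) :
    phi q ℓ m n u s = phi q ℓ m n v s := by
  by_contra hne
  exact absurd (Nat.sInf_le hne) (not_le.2 h)

lemma fd_ge {q ℓ m n u v K : ℕ} (huv : u ≠ v)
    (h : ∀ s < K, phi q ℓ m n u s = phi q ℓ m n v s) : K ≤ fd q ℓ m n u v := by
  by_contra h'
  exact fd_mem (q := q) (ℓ := ℓ) (m := m) (n := n) huv (h _ (not_le.1 h'))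

lemma fd_symm (q ℓ m n u v : ℕ) : fd q ℓ m n u v = fd q ℓ m n v u := by
  unfold fd
  congr 1
  ext s
  exact ne_comm

/-- The ultrametric. -/
noncomputable def DD (q ℓ m n : ℕ) (u v : Fin n) : ℝ :=
  if u = v then 0 else (2⁻¹ : ℝ) ^ (fd q ℓ m n u.val v.val)

lemma DD_self (q ℓ m n : ℕ) (u : Fin n) : DD q ℓ m n u u = 0 := if_pos rfl

lemma DD_nonneg (q ℓ m n : ℕ) (u v : Fin n) : 0 ≤ DD q ℓ m n u v := by
  unfold DD; split
  · exact le_refl 0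
  · positivity

lemma DD_le_one (q ℓ m n : ℕ) (u v : Fin n) : DD q ℓ m n u v ≤ 1 := by
  unfold DD; split
  · norm_num
  · exact pow_le_one₀ (by norm_num) (by norm_num)

lemma DD_eq_zero_iff (q ℓ m n : ℕ) (u v : Fin n) : DD q ℓ m n u v = 0 ↔ u = v := by
  unfold DD; split
  · simpa
  · simp only [iff_false, *]
    positivity

lemma DD_symm (q ℓ m n : ℕ) (u v : Fin n) : DD q ℓ m n u v = DD q ℓ m n v u := by
  unfold DD
  rcases eq_or_ne u v with rfl | h
  · simp
  · rw [if_neg h, if_neg (Ne.symm h), fd_symm]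

lemma DD_of_ne {q ℓ m n : ℕ} {u v : Fin n} (h : u ≠ v) :
    DD q ℓ m n u v = (2⁻¹ : ℝ) ^ (fd q ℓ m n u.val v.val) := if_neg h

lemma DD_le_pow {q ℓ m n K : ℕ} {u v : Fin n}
    (h : ∀ s < K, phi q ℓ m n u.val s = phi q ℓ m n v.val s) :
    DD q ℓ m n u v ≤ (2⁻¹ : ℝ) ^ K := by
  rcases eq_or_ne u v with rfl | hne
  · rw [DD_self]; positivity
  · rw [DD_of_ne hne]
    exact pow_le_pow_of_le_one (by norm_num) (by norm_num)
      (fd_ge (fun hh => hne (Fin.ext hh)) h)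

lemma DD_ultra (q ℓ m n : ℕ) (u v w : Fin n) :
    DD q ℓ m n u w ≤ max (DD q ℓ m n u v) (DD q ℓ m n v w) := by
  rcases eq_or_ne u w with rfl | huw
  · rw [DD_self]
    exact le_max_of_le_left (DD_nonneg _ _ _ _ _ _)
  rcases eq_or_ne u v with rfl | huv
  · exact le_max_right _ _
  rcases eq_or_ne v w with rfl | hvw
  · exact le_max_left _ _
  rw [DD_of_ne huw, DD_of_ne huv, DD_of_ne hvw]
  have hmin : min (fd q ℓ m n u.val v.val) (fd q ℓ m n v.val w.val) ≤ fd q ℓ m n u.val w.val := by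
    apply fd_ge (fun hh => huw (Fin.ext hh))
    intro s hs
    rw [fd_spec (lt_of_lt_of_le hs (min_le_left _ _)),
      fd_spec (lt_of_lt_of_le hs (min_le_right _ _))]
  have h1 : (2⁻¹ : ℝ) ^ (fd q ℓ m n u.val w.val) ≤ (2⁻¹ : ℝ) ^ (min (fd q ℓ m n u.val v.val) (fd q ℓ m n v.val w.val)) :=
    pow_le_pow_of_le_one (by norm_num) (by norm_num) hmin
  rcases min_cases (fd q ℓ m n u.val v.val) (fd q ℓ m n v.val w.val) with ⟨he, _⟩ | ⟨he, _⟩ <;>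
    rw [he] at h1
  · exact le_max_of_le_left h1
  · exact le_max_of_le_right h1

lemma DD_triangle (q ℓ m n : ℕ) (u v w : Fin n) :
    DD q ℓ m n u w ≤ DD q ℓ m n u v + DD q ℓ m n v w := by
  refine (DD_ultra q ℓ m n u v w).trans ?_
  rcases max_cases (DD q ℓ m n u v) (DD q ℓ m n v w) with ⟨he, _⟩ | ⟨he, _⟩ <;> rw [he]
  · nlinarith [DD_nonneg q ℓ m n v w]
  · nlinarith [DD_nonneg q ℓ m n u v]

end Stmt13Aux

namespace Stmt13Aux

lemma digits_inj {q ℓ a b : ℕ} (hq : 0 < q) (ha : a < q ^ ℓ) (hb : b < q ^ ℓ)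
    (h : ∀ s < ℓ, dig q ℓ a s = dig q ℓ b s) : a = b := by
  have key : ∀ t, t ≤ ℓ → a / q ^ (ℓ - t) = b / q ^ (ℓ - t) := by
    intro t
    induction t with
    | zero =>
      intro _
      simp [Nat.div_eq_of_lt ha, Nat.div_eq_of_lt hb]
    | succ t ih =>
      intro ht
      have ht' : t < ℓ := ht
      have ihh := ih ht'.le
      have hexp : ℓ - 1 - t + 1 = ℓ - t := by omega
      have hsplit : ∀ x : ℕ, x / q ^ (ℓ - 1 - t) = q * (x / q ^ (ℓ - t)) + dig q ℓ x t := by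
        intro x
        have h1 : x / q ^ (ℓ - 1 - t) / q = x / q ^ (ℓ - t) := by
          rw [Nat.div_div_eq_div_mul, ← pow_succ, hexp]
        have := Nat.div_add_mod (x / q ^ (ℓ - 1 - t)) q
        rw [h1] at this
        simpa [dig] using this.symm
      have hd := h t ht'
      have : a / q ^ (ℓ - 1 - t) = b / q ^ (ℓ - 1 - t) := by
        rw [hsplit a, hsplit b, ihh, hd]
      have he : ℓ - (t + 1) = ℓ - 1 - t := by omega
      rw [he]
      exact this
  have := key ℓ le_rfl
  simpa using this

lemma Af_lt {m n j : ℕ} (hm : 0 < m) (hj : j < n) : Af m n j < m := by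
  have hn : 0 < n := lt_of_le_of_lt (Nat.zero_le _) hj
  rw [Af, Nat.div_lt_iff_lt_mul hn, mul_comm m n]
  exact Nat.mul_lt_mul_of_pos_right hj hm

lemma Af_mono {m n : ℕ} : Monotone (Af m n) := fun i j hij =>
  Nat.div_le_div_right (Nat.mul_le_mul_right m hij)

lemma Af_step {m n j : ℕ} (hm : 0 < m) (hmn : m ≤ n) : Af m n (j + 1) ≤ Af m n j + 1 := by
  have hn : 0 < n := lt_of_lt_of_le hm hmn
  have h1 : (j + 1) * m = j * m + m := by ring
  calc Af m n (j + 1) = (j * m + m) / n := by rw [Af, h1]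
    _ ≤ (j * m + n) / n := Nat.div_le_div_right (by omega)
    _ = j * m / n + 1 := Nat.add_div_right _ hn
    _ = Af m n j + 1 := rfl

/-- representative point of cluster `a`. -/
def rep (m n a : ℕ) : ℕ := (a * n + m - 1) / m

lemma rep_spec {m n a : ℕ} (hm : 0 < m) (hmn : m ≤ n) (ha : a < m) :
    rep m n a < n ∧ Af m n (rep m n a) = a := by
  have hn : 0 < n := lt_of_lt_of_le hm hmn
  have hrep : rep m n a = (a * n + m - 1) / m := rfl
  have hdm := Nat.div_add_mod (a * n + m - 1) m
  have hmod : (a * n + m - 1) % m < m := Nat.mod_lt _ hm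
  have hcomm : rep m n a * m = m * ((a * n + m - 1) / m) := by rw [hrep, mul_comm]
  have h1 : a * n ≤ rep m n a * m := by omega
  have h2 : rep m n a * m ≤ a * n + m - 1 := by omega
  have han : a * n + m - 1 < (a + 1) * n := by
    have h3 : a * n + n = (a + 1) * n := by ring
    omega
  have hrn : rep m n a < n := by
    by_contra hcon
    push_neg at hcon
    have h5 : n * m ≤ rep m n a * m := Nat.mul_le_mul_right m hcon
    have h4 : a * n + n ≤ n * m := by
      have h6 := Nat.mul_le_mul_right n (show a + 1 ≤ m by omega)
      calc a * n + n = (a + 1) * n := by ring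
        _ ≤ m * n := h6
        _ = n * m := by ring
    omega
  exact ⟨hrn, Nat.div_eq_of_lt_le h1 (by omega)⟩

end Stmt13Aux

namespace Stmt13Aux

lemma phi_lt {q ℓ m n : ℕ} (hq : 4 ≤ q) (j s : ℕ) : phi q ℓ m n j s < q := by
  unfold phi
  split
  · exact lt_of_lt_of_le (Nat.mod_lt _ (by omega)) le_rfl
  · split
    · omega
    · split <;> omega

lemma doubling {q ℓ m n : ℕ} (hq : 4 ≤ q) (x : Fin n) (r : ℝ) :
    ∃ s : Finset (Fin n), s.card ≤ q ∧
      ∀ y, DD q ℓ m n x y ≤ r → ∃ c ∈ s, DD q ℓ m n c y ≤ r / 2 := by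
  classical
  rcases lt_or_ge r 0 with hr | hr
  · refine ⟨∅, by simp, fun y hy => absurd (lt_of_le_of_lt hy hr) (not_lt.2 (DD_nonneg _ _ _ _ _ _))⟩
  rcases eq_or_lt_of_le hr with hr0 | hrpos
  · refine ⟨{x}, by simp [show (1:ℕ) ≤ q by omega], fun y hy => ?_⟩
    have : DD q ℓ m n x y = 0 := le_antisymm (hr0 ▸ hy) (DD_nonneg _ _ _ _ _ _)
    have hxy : x = y := (DD_eq_zero_iff _ _ _ _ _ _).1 this
    exact ⟨x, Finset.mem_singleton_self x, by rw [← hxy, DD_self, ← hr0]; norm_num⟩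
  -- r > 0
  have hne : {k : ℕ | (2⁻¹ : ℝ) ^ k ≤ r}.Nonempty := by
    obtain ⟨k, hk⟩ := exists_pow_lt_of_lt_one hrpos (show (2⁻¹ : ℝ) < 1 by norm_num)
    exact ⟨k, hk.le⟩
  set K := sInf {k : ℕ | (2⁻¹ : ℝ) ^ k ≤ r} with hK
  have hKmem : (2⁻¹ : ℝ) ^ K ≤ r := Nat.sInf_mem hne
  have hKmin : ∀ j < K, r < (2⁻¹ : ℝ) ^ j := by
    intro j hj
    by_contra hcon
    have hjm : j ∈ {k : ℕ | (2⁻¹ : ℝ) ^ k ≤ r} := not_lt.1 hcon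
    exact absurd (Nat.sInf_le hjm) (not_le.2 hj)
  -- all points in the ball agree with x below K
  have hagree : ∀ y : Fin n, DD q ℓ m n x y ≤ r →
      ∀ s < K, phi q ℓ m n x.val s = phi q ℓ m n y.val s := by
    intro y hy s hs
    rcases eq_or_ne x y with rfl | hxy
    · rfl
    · have hDD : (2⁻¹ : ℝ) ^ (fd q ℓ m n x.val y.val) ≤ r := by rwa [DD_of_ne hxy] at hy
      have hfdK : K ≤ fd q ℓ m n x.val y.val := by
        by_contra hcon
        exact absurd hDD (not_le.2 (hKmin _ (not_le.1 hcon)))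
      exact fd_spec (lt_of_lt_of_le hs hfdK)
  set g : ℕ → Fin n := fun w =>
    if h : ∃ y : Fin n, DD q ℓ m n x y ≤ r ∧ phi q ℓ m n y.val K = w then h.choose else x with hg
  set B : Finset (Fin n) := Finset.univ.filter (fun y => DD q ℓ m n x y ≤ r) with hB
  refine ⟨(B.image (fun y => phi q ℓ m n y.val K)).image g, ?_, ?_⟩
  · calc ((B.image (fun y => phi q ℓ m n y.val K)).image g).card
        ≤ (B.image (fun y => phi q ℓ m n y.val K)).card := Finset.card_image_le
      _ ≤ (Finset.range q).card := Finset.card_le_card (by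
          intro w hw
          simp only [Finset.mem_image] at hw
          obtain ⟨y, _, rfl⟩ := hw
          exact Finset.mem_range.2 (phi_lt hq _ _))
      _ = q := Finset.card_range q
  · intro y hy
    have hyB : y ∈ B := by simp [hB, hy]
    have hw : phi q ℓ m n y.val K ∈ B.image (fun y => phi q ℓ m n y.val K) :=
      Finset.mem_image_of_mem _ hyB
    refine ⟨g (phi q ℓ m n y.val K), Finset.mem_image_of_mem g hw, ?_⟩
    have hex : ∃ z : Fin n, DD q ℓ m n x z ≤ r ∧
        phi q ℓ m n z.val K = phi q ℓ m n y.val K := ⟨y, hy, rfl⟩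
    have hgc : g (phi q ℓ m n y.val K) = hex.choose := by rw [hg]; simp [dif_pos hex]
    obtain ⟨hc1, hc2⟩ := hex.choose_spec
    rw [hgc]
    have hle : DD q ℓ m n hex.choose y ≤ (2⁻¹ : ℝ) ^ (K + 1) := by
      apply DD_le_pow
      intro s hs
      rcases Nat.lt_or_ge s K with hsK | hsK
      · rw [← hagree hex.choose hc1 s hsK, hagree y hy s hsK]
      · have hsK' : s = K := by omega
        rw [hsK', hc2]
    refine hle.trans ?_
    rw [pow_succ]
    rw [div_eq_mul_inv r]
    exact mul_le_mul_of_nonneg_right hKmem (by norm_num)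

end Stmt13Aux

namespace Stmt13Aux

section PathLemmas

variable {X : Type*} (D : X → X → ℝ)
  (hnn : ∀ u v, 0 ≤ D u v) (hself : ∀ u, D u u = 0)
  (htri : ∀ u v w, D u w ≤ D u v + D v w) (hle1 : ∀ u v, D u v ≤ 1)
  (hultra : ∀ u v w, D u w ≤ max (D u v) (D v w))

include hself htri in
lemma pw_head_last : ∀ (p : List X) (a b : X), p.head? = some a → p.getLast? = some b →
    D a b ≤ pathWeight D p := by
  intro p
  induction p with
  | nil => intro a b ha _; simp at ha
  | cons x rest ih =>
    intro a b ha hb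
    have hax : a = x := by simpa using ha.symm
    subst hax
    cases rest with
    | nil =>
      have hbx : b = a := by simpa using hb.symm
      subst hbx
      simp [pathWeight, hself]
    | cons y t =>
      have hb' : (y :: t).getLast? = some b := by rwa [List.getLast?_cons_cons] at hb
      have h1 : D y b ≤ pathWeight D (y :: t) := ih y b rfl hb'
      have h2 : pathWeight D (a :: y :: t) = D a y + pathWeight D (y :: t) := rfl
      have := htri a y b
      linarith

include hself htri hle1 hultra in
lemma extract (E : X → X → Prop) :
    ∀ (p : List X) (u v : X), p.Chain' E → p.head? = some u → p.getLast? = some v →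
      D u v = 1 →
      ∃ a b, E a b ∧ D a b = 1 ∧ D u a + D b v ≤ pathWeight D p - 1 := by
  intro p
  induction p with
  | nil => intro u v _ hh _ _; simp at hh
  | cons x rest ih =>
    intro u v hch hh hl hD
    have hux : u = x := by simpa using hh.symm
    subst hux
    cases rest with
    | nil =>
      have hvx : v = u := by simpa using hl.symm
      subst hvx
      rw [hself] at hD
      norm_num at hD
    | cons y t =>
      have hl' : (y :: t).getLast? = some v := by rwa [List.getLast?_cons_cons] at hl
      obtain ⟨hExy, hch'⟩ := List.isChain_cons_cons.1 hch
      have hpw : pathWeight D (u :: y :: t) = D u y + pathWeight D (y :: t) := rfl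
      rcases lt_or_ge (D u y) 1 with h1 | h1
      · -- recurse
        have hyv : D y v = 1 := by
          have hm := hultra u y v
          rw [hD] at hm
          have : 1 ≤ D y v := by
            rcases max_cases (D u y) (D y v) with ⟨he, _⟩ | ⟨he, _⟩ <;> rw [he] at hm
            · linarith
            · exact hm
          exact le_antisymm (hle1 _ _) this
        obtain ⟨a, b, hab, hab1, hsum⟩ := ih y v hch' rfl hl' hyv
        refine ⟨a, b, hab, hab1, ?_⟩
        have := htri u y a
        linarith
      · -- the edge (u, y) has length 1
        have hxy1 : D u y = 1 := le_antisymm (hle1 _ _) h1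
        refine ⟨u, y, hExy, hxy1, ?_⟩
        have h2 : D y v ≤ pathWeight D (y :: t) :=
          pw_head_last D hself htri (y :: t) y v rfl hl'
        rw [hself]
        linarith

end PathLemmas

end Stmt13Aux

namespace Stmt13Aux

lemma cluster_of_close {q ℓ m n : ℕ} (hq : 4 ≤ q) (hl : 1 ≤ ℓ) (hm : m = q ^ ℓ)
    {ε : ℝ} (hεsep : ε < 2 * (2⁻¹ : ℝ) ^ ℓ) {u a : Fin n}
    (h : DD q ℓ m n u a ≤ ε) : Af m n u.val = Af m n a.val := by
  rcases eq_or_ne u a with rfl | hne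
  · rfl
  have hD : (2⁻¹ : ℝ) ^ (fd q ℓ m n u.val a.val) ≤ ε := by rwa [DD_of_ne hne] at h
  have h2 : 2 * (2⁻¹ : ℝ) ^ ℓ = (2⁻¹ : ℝ) ^ (ℓ - 1) := by
    have he : (2⁻¹ : ℝ) ^ ℓ = (2⁻¹ : ℝ) ^ (ℓ - 1) * 2⁻¹ := by
      rw [← pow_succ]
      congr 1
      omega
    rw [he]
    ring
  have hlt : (2⁻¹ : ℝ) ^ (fd q ℓ m n u.val a.val) < (2⁻¹ : ℝ) ^ (ℓ - 1) := by
    rw [← h2]; exact lt_of_le_of_lt hD hεsep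
  have hfd : ℓ - 1 < fd q ℓ m n u.val a.val := by
    by_contra hcon
    push_neg at hcon
    have := pow_le_pow_of_le_one (show (0:ℝ) ≤ 2⁻¹ by norm_num)
      (show (2⁻¹:ℝ) ≤ 1 by norm_num) hcon
    linarith
  have hagree : ∀ s < ℓ, dig q ℓ (Af m n u.val) s = dig q ℓ (Af m n a.val) s := by
    intro s hs
    have hsf : s < fd q ℓ m n u.val a.val := by omega
    have := fd_spec hsf
    simpa [phi, hs] using this
  have hm0 : 0 < m := by rw [hm]; exact pow_pos (by omega) ℓ
  exact digits_inj (show 0 < q by omega) (hm ▸ Af_lt hm0 u.isLt)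
    (hm ▸ Af_lt hm0 a.isLt) hagree

lemma spanner_lower {q ℓ m n : ℕ} (hq : 4 ≤ q) (hl : 1 ≤ ℓ) (hm : m = q ^ ℓ)
    (hmn : m ≤ n) {ε : ℝ} (hε0 : 0 ≤ ε) (hεsep : ε < 2 * (2⁻¹ : ℝ) ^ ℓ)
    (E : Fin n → Fin n → Prop) (hspan : IsSpanner (DD q ℓ m n) E (1 + ε)) :
    (m : ℝ) ^ 2 / 4 ≤ graphWeight (DD q ℓ m n) E := by
  classical
  have hm0 : 0 < m := by rw [hm]; exact pow_pos (by omega) ℓ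
  have hn0 : 0 < n := lt_of_lt_of_le hm0 hmn
  set S : Finset (ℕ × ℕ) := (Finset.range m ×ˢ Finset.range m).filter
    (fun ab => dig q ℓ ab.1 0 ≠ dig q ℓ ab.2 0) with hS
  -- for each pair in S there is a unit edge between the corresponding clusters
  have hmain : ∀ ab : ℕ × ℕ, ∃ pq : Fin n × Fin n, ab ∈ S →
      E pq.1 pq.2 ∧ DD q ℓ m n pq.1 pq.2 = 1 ∧
      Af m n pq.1.val = ab.1 ∧ Af m n pq.2.val = ab.2 := by
    intro ab
    by_cases hab : ab ∈ S
    swap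
    · exact ⟨(⟨0, hn0⟩, ⟨0, hn0⟩), fun h => absurd h hab⟩
    obtain ⟨hmem, hdig⟩ := Finset.mem_filter.1 hab
    rw [Finset.mem_product] at hmem
    have ha : ab.1 < m := Finset.mem_range.1 hmem.1
    have hb : ab.2 < m := Finset.mem_range.1 hmem.2
    obtain ⟨hua, hAa⟩ := rep_spec hm0 hmn ha
    obtain ⟨hvb, hAb⟩ := rep_spec hm0 hmn hb
    set u : Fin n := ⟨rep m n ab.1, hua⟩
    set v : Fin n := ⟨rep m n ab.2, hvb⟩
    have hAu : Af m n u.val = ab.1 := hAa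
    have hAv : Af m n v.val = ab.2 := hAb
    have huv : u ≠ v := by
      intro huv
      apply hdig
      rw [← hAu, ← hAv, huv]
    have hfd0 : fd q ℓ m n u.val v.val = 0 := by
      apply Nat.sInf_eq_zero.2
      left
      show phi q ℓ m n u.val 0 ≠ phi q ℓ m n v.val 0
      have h0ℓ : 0 < ℓ := hl
      simpa [phi, h0ℓ, hAu, hAv] using hdig
    have hDuv : DD q ℓ m n u v = 1 := by rw [DD_of_ne huv, hfd0, pow_zero]
    obtain ⟨p, hch, hh, hlast, hpw⟩ := hspan u v
    rw [hDuv, mul_one] at hpw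
    obtain ⟨a, b, hEab, hab1, hsum⟩ := extract (DD q ℓ m n)
      (DD_self q ℓ m n) (DD_triangle q ℓ m n) (DD_le_one q ℓ m n) (DD_ultra q ℓ m n)
      E p u v hch hh hlast hDuv
    have hua' : DD q ℓ m n u a ≤ ε := by
      have := DD_nonneg q ℓ m n b v
      linarith
    have hbv' : DD q ℓ m n b v ≤ ε := by
      have := DD_nonneg q ℓ m n u a
      linarith
    have hAua : Af m n a.val = ab.1 := by rw [← cluster_of_close hq hl hm hεsep hua', hAu]
    have hAvb : Af m n b.val = ab.2 := by
      rw [DD_symm] at hbv'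
      rw [← cluster_of_close hq hl hm hεsep hbv', hAv]
    exact ⟨(a, b), fun _ => ⟨hEab, hab1, hAua, hAvb⟩⟩
  choose F hF using hmain
  -- the sum over distinct edges
  have hinj : ∀ x ∈ S, ∀ y ∈ S, F x = F y → x = y := by
    intro x hx y hy hxy
    obtain ⟨_, _, hx1, hx2⟩ := hF x hx
    obtain ⟨_, _, hy1, hy2⟩ := hF y hy
    have : Af m n (F x).1.val = Af m n (F y).1.val := by rw [hxy]
    have h1 : x.1 = y.1 := by rw [← hx1, ← hy1, hxy]
    have h2 : x.2 = y.2 := by rw [← hx2, ← hy2, hxy]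
    exact Prod.ext h1 h2
  have hcard_le : (S.card : ℝ) ≤ ∑ u : Fin n, ∑ v : Fin n,
      (if E u v then DD q ℓ m n u v else 0) := by
    rw [← Finset.sum_product' Finset.univ Finset.univ
      (fun u v => if E u v then DD q ℓ m n u v else 0)]
    have hsub : S.image F ⊆ Finset.univ ×ˢ Finset.univ := by
      intro p _
      simp [Finset.mem_product]
    have h1 : ∑ p ∈ S.image F, (if E p.1 p.2 then DD q ℓ m n p.1 p.2 else 0) ≤
        ∑ p ∈ Finset.univ ×ˢ Finset.univ, (if E p.1 p.2 then DD q ℓ m n p.1 p.2 else 0) := by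
      apply Finset.sum_le_sum_of_subset_of_nonneg hsub
      intro p _ _
      split
      · exact DD_nonneg _ _ _ _ _ _
      · exact le_rfl
    have h2 : ∑ p ∈ S.image F, (if E p.1 p.2 then DD q ℓ m n p.1 p.2 else 0) =
        ∑ ab ∈ S, (if E (F ab).1 (F ab).2 then DD q ℓ m n (F ab).1 (F ab).2 else 0) :=
      Finset.sum_image hinj
    have h3 : ∀ ab ∈ S, (if E (F ab).1 (F ab).2 then DD q ℓ m n (F ab).1 (F ab).2 else 0) = 1 := by
      intro ab hab
      obtain ⟨hE', hD', _, _⟩ := hF ab hab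
      rw [if_pos hE', hD']
    calc (S.card : ℝ) = ∑ _ab ∈ S, (1:ℝ) := by simp
      _ = ∑ ab ∈ S, (if E (F ab).1 (F ab).2 then DD q ℓ m n (F ab).1 (F ab).2 else 0) :=
          (Finset.sum_congr rfl h3).symm
      _ = ∑ p ∈ S.image F, (if E p.1 p.2 then DD q ℓ m n p.1 p.2 else 0) := h2.symm
      _ ≤ _ := h1
  -- lower bound on S.card
  have hScard : (m : ℝ) ^ 2 / 2 ≤ (S.card : ℝ) := by
    have hQ : 0 < q ^ (ℓ - 1) := by positivity
    set Sc := (Finset.range m ×ˢ Finset.range m).filter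
      (fun ab => ¬ dig q ℓ ab.1 0 ≠ dig q ℓ ab.2 0) with hSc
    have hsplit : S.card + Sc.card = m * m := by
      rw [hS, hSc, Finset.card_filter_add_card_filter_not]
      simp [Finset.card_product]
    have hmaps : ∀ ab ∈ Sc, (ab.1, ab.2 % q ^ (ℓ - 1)) ∈
        Finset.range m ×ˢ Finset.range (q ^ (ℓ - 1)) := by
      intro ab hab
      obtain ⟨hmem, _⟩ := Finset.mem_filter.1 hab
      rw [Finset.mem_product] at hmem ⊢
      exact ⟨hmem.1, Finset.mem_range.2 (Nat.mod_lt _ hQ)⟩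
    have hinjOn : Set.InjOn (fun ab : ℕ × ℕ => (ab.1, ab.2 % q ^ (ℓ - 1))) ↑Sc := by
        intro ab hab ab' hab' heq
        rw [Finset.mem_coe, hSc, Finset.mem_filter] at hab hab'
        obtain ⟨hmem, hd⟩ := hab
        obtain ⟨hmem', hd'⟩ := hab'
        rw [Finset.mem_product, Finset.mem_range, Finset.mem_range] at hmem hmem'
        push_neg at hd hd'
        simp only [Prod.mk.injEq] at heq
        obtain ⟨h1, h2⟩ := heq
        -- recover high digit
        have hdig0 : ∀ b : ℕ, b < m → dig q ℓ b 0 = b / q ^ (ℓ - 1) := by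
          intro b hbm
          have hb' : b / q ^ (ℓ - 1) < q := by
            have hqq : q * q ^ (ℓ - 1) = q ^ ℓ := by
              rw [← pow_succ']
              congr 1
              omega
            rw [Nat.div_lt_iff_lt_mul hQ, hqq, ← hm]
            exact hbm
          rw [dig]
          simp only [Nat.sub_zero]
          exact Nat.mod_eq_of_lt hb'
        have hdiv : ab.2 / q ^ (ℓ - 1) = ab'.2 / q ^ (ℓ - 1) := by
          rw [← hdig0 _ hmem.2, ← hdig0 _ hmem'.2, ← hd, ← hd', h1]
        have hda := Nat.div_add_mod ab.2 (q ^ (ℓ - 1))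
        have hdb := Nat.div_add_mod ab'.2 (q ^ (ℓ - 1))
        have hprod : q ^ (ℓ - 1) * (ab.2 / q ^ (ℓ - 1)) = q ^ (ℓ - 1) * (ab'.2 / q ^ (ℓ - 1)) := by
          rw [hdiv]
        have h3 : ab.2 = ab'.2 := by omega
        exact Prod.ext h1 h3
    have hScle : Sc.card ≤ m * q ^ (ℓ - 1) := by
      have hc := Finset.card_le_card_of_injOn
        (fun ab : ℕ × ℕ => (ab.1, ab.2 % q ^ (ℓ - 1))) hmaps hinjOn
      calc Sc.card ≤ (Finset.range m ×ˢ Finset.range (q ^ (ℓ - 1))).card := hc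
        _ = m * q ^ (ℓ - 1) := by simp [Finset.card_product]
    have hqm : 4 * q ^ (ℓ - 1) ≤ m := by
      rw [hm]
      calc 4 * q ^ (ℓ - 1) ≤ q * q ^ (ℓ - 1) := Nat.mul_le_mul_right _ hq
        _ = q ^ ℓ := by rw [← pow_succ']; congr 1; omega
    have hc1 : (Sc.card : ℝ) ≤ (m : ℝ) * (m : ℝ) / 4 := by
      have h4 : (Sc.card : ℝ) ≤ (m : ℝ) * ((q : ℝ) ^ (ℓ - 1)) := by
        have := hScle
        have h4' : ((Sc.card : ℕ) : ℝ) ≤ ((m * q ^ (ℓ - 1) : ℕ) : ℝ) := by exact_mod_cast this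
        push_cast at h4'
        linarith
      have h5 : (q : ℝ) ^ (ℓ - 1) ≤ (m : ℝ) / 4 := by
        have h5' : ((4 * q ^ (ℓ - 1) : ℕ) : ℝ) ≤ ((m : ℕ) : ℝ) := by exact_mod_cast hqm
        push_cast at h5'
        linarith
      nlinarith [Nat.cast_nonneg (α := ℝ) m]
    have hcards : (S.card : ℝ) + (Sc.card : ℝ) = (m : ℝ) * (m : ℝ) := by
      exact_mod_cast hsplit
    nlinarith
  rw [graphWeight]
  linarith [hScard, hcard_le]

end Stmt13Aux

namespace Stmt13Aux

open SimpleGraph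

lemma pathGraph_isTree {n : ℕ} (hn : 0 < n) : (pathGraph n).IsTree := by
  obtain ⟨k, rfl⟩ : ∃ k, n = k + 1 := ⟨n - 1, by omega⟩
  constructor
  · exact pathGraph_connected k
  · rw [isAcyclic_iff_forall_adj_isBridge]
    intro v w hadj
    have key : ∀ (u z : Fin (k+1)), u.val + 1 = z.val →
        (pathGraph (k+1)).IsBridge s(u, z) := by
      intro u z huz
      rw [isBridge_iff]
      have hadj' : (pathGraph (k+1)).Adj u z := pathGraph_adj.2 (Or.inl huz)
      intro hreach
      obtain ⟨p⟩ := hreach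
      have bound : ∀ {x y : Fin (k+1)}
          (p' : (pathGraph (k+1) \ fromEdgeSet {s(u, z)}).Walk x y),
          x.val ≤ u.val → y.val ≤ u.val := by
        intro x y p'
        induction p' with
        | nil => exact fun h => h
        | @cons x' z' y' h p'' ih =>
          intro hx
          apply ih
          rw [SimpleGraph.sdiff_adj] at h
          obtain ⟨hpa, hne⟩ := h
          rw [pathGraph_adj] at hpa
          rcases hpa with h1 | h1
          · -- x' + 1 = z'
            rcases Nat.lt_or_ge x'.val u.val with hlt | hge
            · omega
            · have hxu : x'.val = u.val := by omega
              exfalso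
              apply hne
              rw [fromEdgeSet_adj]
              have hx'u : x' = u := Fin.ext hxu
              have hz'z : z' = z := Fin.ext (by omega)
              refine ⟨by rw [hx'u, hz'z]; exact Set.mem_singleton _, ?_⟩
              intro hcon
              rw [hcon] at h1
              omega
          · omega
      have := bound p le_rfl
      omega
    rw [pathGraph_adj] at hadj
    rcases hadj with h1 | h1
    · exact key v w h1
    · rw [Sym2.eq_swap]
      exact key w v h1

end Stmt13Aux

namespace Stmt13Aux

open SimpleGraph

lemma gw_path_le (q ℓ m n : ℕ) :
    graphWeight (DD q ℓ m n) (pathGraph n).Adj ≤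
      ∑ j ∈ Finset.range (n - 1), (2⁻¹ : ℝ) ^ (fd q ℓ m n j (j + 1)) := by
  classical
  set W : ℝ := ∑ j ∈ Finset.range (n - 1), (2⁻¹ : ℝ) ^ (fd q ℓ m n j (j + 1)) with hW
  set g1 : Fin n → Fin n → ℝ := fun u v =>
    if u.val + 1 = v.val then (2⁻¹ : ℝ) ^ (fd q ℓ m n u.val v.val) else 0 with hg1
  have hg1nn : ∀ u v, 0 ≤ g1 u v := by
    intro u v
    rw [hg1]
    dsimp only
    split
    · positivity
    · exact le_rfl
  have hpt : ∀ u v : Fin n,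
      (if (pathGraph n).Adj u v then DD q ℓ m n u v else 0) ≤ g1 u v + g1 v u := by
    intro u v
    by_cases hadj : (pathGraph n).Adj u v
    · rw [if_pos hadj]
      have hne : u ≠ v := hadj.ne
      rw [DD_of_ne hne]
      rcases pathGraph_adj.1 hadj with h1 | h1
      · have e1 : g1 u v = (2⁻¹ : ℝ) ^ (fd q ℓ m n u.val v.val) := if_pos h1
        have : 0 ≤ g1 v u := hg1nn v u
        linarith [e1]
      · have e1 : g1 v u = (2⁻¹ : ℝ) ^ (fd q ℓ m n v.val u.val) := if_pos h1
        rw [fd_symm]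
        have : 0 ≤ g1 u v := hg1nn u v
        linarith [e1]
    · rw [if_neg hadj]
      have := hg1nn u v
      have := hg1nn v u
      linarith
  have hsum1 : ∑ u : Fin n, ∑ v : Fin n, g1 u v = W := by
    have hinner : ∀ u : Fin n, (∑ v : Fin n, g1 u v) =
        (if u.val + 1 < n then (2⁻¹ : ℝ) ^ (fd q ℓ m n u.val (u.val + 1)) else 0) := by
      intro u
      by_cases h : u.val + 1 < n
      · rw [if_pos h]
        have : (∑ v : Fin n, g1 u v) = g1 u ⟨u.val + 1, h⟩ := by
          apply Finset.sum_eq_single_of_mem _ (Finset.mem_univ _)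
          intro b _ hb
          rw [hg1]
          dsimp only
          rw [if_neg]
          intro hc
          exact hb (Fin.ext hc.symm)
        rw [this, hg1]
        exact if_pos rfl
      · rw [if_neg h]
        apply Finset.sum_eq_zero
        intro v _
        rw [hg1]
        dsimp only
        rw [if_neg]
        intro hc
        exact h (hc ▸ v.isLt)
    calc ∑ u : Fin n, ∑ v : Fin n, g1 u v
        = ∑ u : Fin n, (if u.val + 1 < n then (2⁻¹ : ℝ) ^ (fd q ℓ m n u.val (u.val + 1)) else 0) :=
          Finset.sum_congr rfl (fun u _ => hinner u)
      _ = ∑ j ∈ Finset.range n,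
            (if j + 1 < n then (2⁻¹ : ℝ) ^ (fd q ℓ m n j (j + 1)) else 0) :=
          Fin.sum_univ_eq_sum_range (fun j => if j + 1 < n then (2⁻¹ : ℝ) ^ (fd q ℓ m n j (j + 1)) else 0) n
      _ = W := by
          rw [hW]
          rw [← Finset.sum_subset (Finset.range_subset_range.2 (show n - 1 ≤ n by omega))]
          · apply Finset.sum_congr rfl
            intro j hj
            rw [if_pos]
            have := Finset.mem_range.1 hj
            omega
          · intro j hj hnj
            rw [if_neg]
            have := Finset.mem_range.1 hj
            rw [Finset.mem_range] at hnj
            omega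
  have hsum2 : ∑ u : Fin n, ∑ v : Fin n, g1 v u = W := by
    rw [Finset.sum_comm]
    exact hsum1
  rw [graphWeight]
  have hle : ∑ u : Fin n, ∑ v : Fin n, (if (pathGraph n).Adj u v then DD q ℓ m n u v else 0) ≤
      2 * W := by
    calc ∑ u : Fin n, ∑ v : Fin n, (if (pathGraph n).Adj u v then DD q ℓ m n u v else 0)
        ≤ ∑ u : Fin n, ∑ v : Fin n, (g1 u v + g1 v u) :=
          Finset.sum_le_sum (fun u _ => Finset.sum_le_sum (fun v _ => hpt u v))
      _ = (∑ u : Fin n, ∑ v : Fin n, g1 u v) + (∑ u : Fin n, ∑ v : Fin n, g1 v u) := by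
          rw [← Finset.sum_add_distrib]
          apply Finset.sum_congr rfl
          intro u _
          rw [← Finset.sum_add_distrib]
      _ = 2 * W := by rw [hsum1, hsum2]; ring
  linarith

end Stmt13Aux

namespace Stmt13Aux

/-- the scale of the jump after point `j`. -/
noncomputable def t0 (q ℓ m n j : ℕ) : ℕ := sInf {t | q ^ (ℓ - t) ∣ (Af m n j + 1)}

lemma t0_le (q ℓ m n j : ℕ) : t0 q ℓ m n j ≤ ℓ :=
  Nat.sInf_le (by simp [Set.mem_setOf_eq, Nat.sub_self])

lemma t0_dvd (q ℓ m n j : ℕ) : q ^ (ℓ - t0 q ℓ m n j) ∣ (Af m n j + 1) :=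
  Nat.sInf_mem (⟨ℓ, by simp [Set.mem_setOf_eq, Nat.sub_self]⟩ :
    {t | q ^ (ℓ - t) ∣ (Af m n j + 1)}.Nonempty)

lemma t0_min {q ℓ m n j t : ℕ} (h : t < t0 q ℓ m n j) : ¬ q ^ (ℓ - t) ∣ (Af m n j + 1) := by
  intro hdvd
  exact absurd (Nat.sInf_le (show t ∈ {t' | q ^ (ℓ - t') ∣ (Af m n j + 1)} from hdvd))
    (not_le.2 h)

lemma fd_intra {q ℓ m n j : ℕ} (hsame : Af m n (j + 1) = Af m n j) :
    ℓ + j ≤ fd q ℓ m n j (j + 1) := by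
  apply fd_ge (by omega)
  intro s hs
  unfold phi
  by_cases hsl : s < ℓ
  · rw [if_pos hsl, if_pos hsl, hsame]
  · rw [if_neg hsl, if_neg hsl]
    have h1 : s - ℓ < j := by omega
    rw [if_pos h1, if_pos (by omega : s - ℓ < j + 1)]

lemma fd_jump {q ℓ m n j : ℕ} (hq : 4 ≤ q) (hl : 1 ≤ ℓ)
    (hjump : Af m n (j + 1) = Af m n j + 1) :
    (2⁻¹ : ℝ) ^ (fd q ℓ m n j (j + 1)) ≤ 2 * (2⁻¹ : ℝ) ^ (t0 q ℓ m n j) := by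
  have hfd : t0 q ℓ m n j - 1 ≤ fd q ℓ m n j (j + 1) := by
    apply fd_ge (by omega)
    intro s hs
    have ht0l := t0_le q ℓ m n j
    have hsl : s < ℓ := by omega
    unfold phi
    rw [if_pos hsl, if_pos hsl, hjump]
    unfold dig
    have hnd : ¬ q ^ (ℓ - (s + 1)) ∣ (Af m n j + 1) := t0_min (by omega)
    have he : ℓ - 1 - s = ℓ - (s + 1) := by omega
    rw [he]
    rw [Nat.succ_div, if_neg hnd, add_zero]
  calc (2⁻¹ : ℝ) ^ (fd q ℓ m n j (j + 1)) ≤ (2⁻¹ : ℝ) ^ (t0 q ℓ m n j - 1) :=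
        pow_le_pow_of_le_one (by norm_num) (by norm_num) hfd
    _ ≤ 2 * (2⁻¹ : ℝ) ^ (t0 q ℓ m n j) := by
        rcases Nat.eq_zero_or_pos (t0 q ℓ m n j) with h0 | h0
        · rw [h0]
          norm_num
        · have he : t0 q ℓ m n j - 1 + 1 = t0 q ℓ m n j := by omega
          calc (2⁻¹:ℝ) ^ (t0 q ℓ m n j - 1)
              = 2 * ((2⁻¹:ℝ) ^ (t0 q ℓ m n j - 1) * 2⁻¹) := by ring
            _ = 2 * (2⁻¹:ℝ) ^ (t0 q ℓ m n j) := by rw [← pow_succ, he]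
            _ ≤ 2 * (2⁻¹:ℝ) ^ (t0 q ℓ m n j) := le_rfl

lemma geom_le {r : ℝ} (hr : 2 ≤ r) (k : ℕ) : ∑ t ∈ Finset.range (k + 1), r ^ t ≤ 2 * r ^ k := by
  induction k with
  | zero => norm_num
  | succ k ih =>
    rw [Finset.sum_range_succ]
    have hp : (0:ℝ) ≤ r ^ k := by positivity
    have : r ^ (k + 1) = r * r ^ k := by rw [pow_succ]; ring
    nlinarith

lemma half_geom_le (k : ℕ) : ∑ j ∈ Finset.range k, (2⁻¹ : ℝ) ^ j ≤ 2 := by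
  have hne : (2⁻¹ : ℝ) ≠ 1 := by norm_num
  rw [geom_sum_eq hne]
  have hp : (0:ℝ) ≤ (2⁻¹ : ℝ) ^ k := by positivity
  have : ((2⁻¹ : ℝ) ^ k - 1) / (2⁻¹ - 1) = 2 * (1 - (2⁻¹ : ℝ) ^ k) := by
    field_simp
    ring
  rw [this]
  nlinarith

lemma W_le {q ℓ m n : ℕ} (hq : 4 ≤ q) (hl : 1 ≤ ℓ) (hm : m = q ^ ℓ) (hmn : m ≤ n) :
    ∑ j ∈ Finset.range (n - 1), (2⁻¹ : ℝ) ^ (fd q ℓ m n j (j + 1)) ≤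
      6 * m * (2⁻¹ : ℝ) ^ ℓ := by
  classical
  have hm0 : 0 < m := by rw [hm]; exact pow_pos (by omega) ℓ
  set P : ℕ → Prop := fun j => Af m n (j + 1) = Af m n j with hP
  have hsplit := Finset.sum_filter_add_sum_filter_not (Finset.range (n - 1)) P
    (fun j => (2⁻¹ : ℝ) ^ (fd q ℓ m n j (j + 1)))
  -- intra part
  have hintra : ∑ j ∈ (Finset.range (n - 1)).filter P, (2⁻¹ : ℝ) ^ (fd q ℓ m n j (j + 1)) ≤
      2 * (2⁻¹ : ℝ) ^ ℓ := by
    have h1 : ∀ j ∈ (Finset.range (n - 1)).filter P,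
        (2⁻¹ : ℝ) ^ (fd q ℓ m n j (j + 1)) ≤ (2⁻¹ : ℝ) ^ (ℓ + j) := by
      intro j hj
      obtain ⟨_, hPj⟩ := Finset.mem_filter.1 hj
      exact pow_le_pow_of_le_one (by norm_num) (by norm_num) (fd_intra hPj)
    calc ∑ j ∈ (Finset.range (n - 1)).filter P, (2⁻¹ : ℝ) ^ (fd q ℓ m n j (j + 1))
        ≤ ∑ j ∈ (Finset.range (n - 1)).filter P, (2⁻¹ : ℝ) ^ (ℓ + j) := Finset.sum_le_sum h1
      _ ≤ ∑ j ∈ Finset.range (n - 1), (2⁻¹ : ℝ) ^ (ℓ + j) := by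
          apply Finset.sum_le_sum_of_subset_of_nonneg (Finset.filter_subset _ _)
          intro j _ _
          positivity
      _ = (2⁻¹ : ℝ) ^ ℓ * ∑ j ∈ Finset.range (n - 1), (2⁻¹ : ℝ) ^ j := by
          rw [Finset.mul_sum]
          apply Finset.sum_congr rfl
          intro j _
          rw [pow_add]
      _ ≤ (2⁻¹ : ℝ) ^ ℓ * 2 := by
          apply mul_le_mul_of_nonneg_left (half_geom_le _) (by positivity)
      _ = 2 * (2⁻¹ : ℝ) ^ ℓ := by ring
  -- jump part
  have hjump : ∑ j ∈ (Finset.range (n - 1)).filter (fun j => ¬ P j),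
      (2⁻¹ : ℝ) ^ (fd q ℓ m n j (j + 1)) ≤ 4 * m * (2⁻¹ : ℝ) ^ ℓ := by
    set J := (Finset.range (n - 1)).filter (fun j => ¬ P j) with hJ
    have hjumpeq : ∀ j ∈ J, Af m n (j + 1) = Af m n j + 1 := by
      intro j hj
      obtain ⟨_, hnj⟩ := Finset.mem_filter.1 hj
      have h1 := Af_step (j := j) hm0 hmn
      have h2 := Af_mono (m := m) (n := n) (show j ≤ j + 1 by omega)
      rw [hP] at hnj
      omega
    have hstep : ∀ j ∈ J, (2⁻¹ : ℝ) ^ (fd q ℓ m n j (j + 1)) ≤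
        2 * (2⁻¹ : ℝ) ^ (t0 q ℓ m n j) :=
      fun j hj => fd_jump hq hl (hjumpeq j hj)
    have hfiber : ∑ j ∈ J, (2⁻¹ : ℝ) ^ (t0 q ℓ m n j) ≤ 2 * ((q : ℝ) * 2⁻¹) ^ ℓ := by
      have hmaps : ∀ j ∈ J, t0 q ℓ m n j ∈ Finset.range (ℓ + 1) :=
        fun j _ => Finset.mem_range.2 (by have := t0_le q ℓ m n j; omega)
      rw [← Finset.sum_fiberwise_of_maps_to hmaps]
      have hinner : ∀ t ∈ Finset.range (ℓ + 1),
          ∑ j ∈ J.filter (fun j => t0 q ℓ m n j = t), (2⁻¹ : ℝ) ^ (t0 q ℓ m n j) ≤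
            ((q : ℝ) * 2⁻¹) ^ t := by
        intro t ht
        have htl : t ≤ ℓ := by have := Finset.mem_range.1 ht; omega
        have hcard : (J.filter (fun j => t0 q ℓ m n j = t)).card ≤ q ^ t := by
          have hinjmem : ∀ j ∈ J.filter (fun j => t0 q ℓ m n j = t),
              (Af m n j + 1) / q ^ (ℓ - t) ∈ Finset.Icc 1 (q ^ t) := by
            intro j hj
            obtain ⟨hjJ, hjt⟩ := Finset.mem_filter.1 hj
            have hdvd : q ^ (ℓ - t) ∣ (Af m n j + 1) := hjt ▸ t0_dvd q ℓ m n j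
            have hQ0 : 0 < q ^ (ℓ - t) := pow_pos (by omega) _
            rw [Finset.mem_Icc]
            constructor
            · rw [Nat.one_le_div_iff hQ0]
              exact Nat.le_of_dvd (by omega) hdvd
            · have hjn : j < n := by
                have := Finset.mem_range.1 (Finset.mem_filter.1 hjJ).1
                omega
              have hAle : Af m n j + 1 ≤ m := Af_lt hm0 hjn
              have : m = q ^ (ℓ - t) * q ^ t := by
                rw [hm, ← pow_add]
                congr 1
                omega
              calc (Af m n j + 1) / q ^ (ℓ - t) ≤ m / q ^ (ℓ - t) :=
                    Nat.div_le_div_right hAle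
                _ = q ^ t := by rw [this, Nat.mul_div_cancel_left _ hQ0]
          have hinjOn : Set.InjOn (fun j => (Af m n j + 1) / q ^ (ℓ - t))
              ↑(J.filter (fun j => t0 q ℓ m n j = t)) := by
            intro j hj j' hj' heq
            rw [Finset.mem_coe, Finset.mem_filter] at hj hj'
            have hdvd : q ^ (ℓ - t) ∣ (Af m n j + 1) := hj.2 ▸ t0_dvd q ℓ m n j
            have hdvd' : q ^ (ℓ - t) ∣ (Af m n j' + 1) := hj'.2 ▸ t0_dvd q ℓ m n j'
            have hA : Af m n j + 1 = Af m n j' + 1 := by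
              have e1 := Nat.div_mul_cancel hdvd
              have e2 := Nat.div_mul_cancel hdvd'
              dsimp only at heq
              rw [← e1, ← e2, heq]
            have hAeq : Af m n j = Af m n j' := by omega
            by_contra hne
            rcases Nat.lt_or_ge j j' with hlt | hge
            · have h1 := hjumpeq j hj.1
              have h2 := Af_mono (m := m) (n := n) (show j + 1 ≤ j' by omega)
              omega
            · have hlt' : j' < j := by omega
              have h1 := hjumpeq j' hj'.1
              have h2 := Af_mono (m := m) (n := n) (show j' + 1 ≤ j by omega)
              omega
          calc (J.filter (fun j => t0 q ℓ m n j = t)).card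
              ≤ (Finset.Icc 1 (q ^ t)).card :=
                Finset.card_le_card_of_injOn _ hinjmem hinjOn
            _ = q ^ t := by rw [Nat.card_Icc]; omega
        calc ∑ j ∈ J.filter (fun j => t0 q ℓ m n j = t), (2⁻¹ : ℝ) ^ (t0 q ℓ m n j)
            = ∑ j ∈ J.filter (fun j => t0 q ℓ m n j = t), (2⁻¹ : ℝ) ^ t := by
              apply Finset.sum_congr rfl
              intro j hj
              rw [(Finset.mem_filter.1 hj).2]
          _ = ((J.filter (fun j => t0 q ℓ m n j = t)).card : ℝ) * (2⁻¹ : ℝ) ^ t := by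
              rw [Finset.sum_const, nsmul_eq_mul]
          _ ≤ ((q ^ t : ℕ) : ℝ) * (2⁻¹ : ℝ) ^ t := by
              apply mul_le_mul_of_nonneg_right _ (by positivity)
              exact_mod_cast hcard
          _ = ((q : ℝ) * 2⁻¹) ^ t := by
              push_cast
              rw [mul_pow]
      calc ∑ t ∈ Finset.range (ℓ + 1),
            ∑ j ∈ J.filter (fun j => t0 q ℓ m n j = t), (2⁻¹ : ℝ) ^ (t0 q ℓ m n j)
          ≤ ∑ t ∈ Finset.range (ℓ + 1), ((q : ℝ) * 2⁻¹) ^ t := Finset.sum_le_sum hinner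
        _ ≤ 2 * ((q : ℝ) * 2⁻¹) ^ ℓ := by
            apply geom_le
            have : (4:ℝ) ≤ (q:ℝ) := by exact_mod_cast hq
            linarith
    have hqm : ((q : ℝ) * 2⁻¹) ^ ℓ = (m : ℝ) * (2⁻¹ : ℝ) ^ ℓ := by
      rw [mul_pow, hm]
      push_cast
      ring
    calc ∑ j ∈ J, (2⁻¹ : ℝ) ^ (fd q ℓ m n j (j + 1))
        ≤ ∑ j ∈ J, 2 * (2⁻¹ : ℝ) ^ (t0 q ℓ m n j) := Finset.sum_le_sum hstep
      _ = 2 * ∑ j ∈ J, (2⁻¹ : ℝ) ^ (t0 q ℓ m n j) := by rw [Finset.mul_sum]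
      _ ≤ 2 * (2 * ((q : ℝ) * 2⁻¹) ^ ℓ) := by linarith [hfiber]
      _ = 4 * m * (2⁻¹ : ℝ) ^ ℓ := by rw [hqm]; ring
  have hm1 : (1:ℝ) ≤ (m:ℝ) := by exact_mod_cast hm0
  have hpl : (0:ℝ) ≤ (2⁻¹:ℝ) ^ ℓ := by positivity
  nlinarith [hsplit, hintra, hjump]

end Stmt13Aux

namespace Stmt13Aux

lemma gw_nonneg {X : Type*} [Fintype X] (D : X → X → ℝ) (hnn : ∀ u v, 0 ≤ D u v)
    (E : X → X → Prop) : 0 ≤ graphWeight D E := by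
  classical
  rw [graphWeight]
  apply div_nonneg _ (by norm_num)
  apply Finset.sum_nonneg
  intro u _
  apply Finset.sum_nonneg
  intro v _
  split
  · exact hnn u v
  · exact le_rfl

end Stmt13Aux

open Stmt13Aux in
/-- for every `d ≥ 2` there are constants `c₁, c₂ > 0` such that for
every `ε ∈ (0,1)` and all sufficiently large `n` with `ε⁻¹^d ≤ c₁·n`, there is an
`n`-point ultrametric space of doubling dimension at most `d` on which every
`(1+ε)`-spanner has lightness at least `c₂·ε⁻¹^(d+1)`: its weight is at least
`c₂·ε⁻¹^(d+1)` times the weight of a minimum spanning tree. -/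
theorem stmt13 (d : ℕ) (hd : 2 ≤ d) :
    ∃ c₁ c₂ : ℝ, 0 < c₁ ∧ 0 < c₂ ∧
    ∀ ε : ℝ, 0 < ε → ε < 1 → ∃ n₀ : ℕ, ∀ n : ℕ, n₀ ≤ n → ε⁻¹ ^ d ≤ c₁ * n →
    ∃ dX : Fin n → Fin n → ℝ,
      (∀ u v, 0 ≤ dX u v) ∧
      (∀ u v, dX u v = 0 ↔ u = v) ∧
      (∀ u v, dX u v = dX v u) ∧
      (∀ u v w, dX u w ≤ max (dX u v) (dX v w)) ∧
      (∀ (x : Fin n) (r : ℝ), ∃ s : Finset (Fin n), s.card ≤ 2 ^ d ∧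
        ∀ y, dX x y ≤ r → ∃ c ∈ s, dX c y ≤ r / 2) ∧
      (∀ E : Fin n → Fin n → Prop, Symmetric E → (∀ x, ¬ E x x) →
        IsSpanner dX E (1 + ε) →
        ∀ T : SimpleGraph (Fin n), T.IsTree →
          (∀ T' : SimpleGraph (Fin n), T'.IsTree →
            graphWeight dX T.Adj ≤ graphWeight dX T'.Adj) →
          c₂ * ε⁻¹ ^ (d + 1) * graphWeight dX T.Adj ≤ graphWeight dX E) := by
  refine ⟨(1/4 : ℝ) ^ d, (2⁻¹ : ℝ) ^ (d + 1) / 24, by positivity, by positivity, ?_⟩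
  intro ε hε0 hε1
  refine ⟨1, ?_⟩
  intro n hn1 hcn
  have hεinv1 : (1:ℝ) ≤ ε⁻¹ := by
    rw [le_inv_comm₀ (by norm_num) hε0]
    simpa using hε1.le
  set z : ℕ := ⌊ε⁻¹⌋₊ with hzdef
  have hz1 : 1 ≤ z := Nat.le_floor (by exact_mod_cast hεinv1)
  set ℓ : ℕ := max 1 (Nat.log 2 z) with hldef
  set q : ℕ := 2 ^ d with hqdef
  set m : ℕ := q ^ ℓ with hmdef
  have hq : 4 ≤ q := by
    calc (4:ℕ) = 2 ^ 2 := by norm_num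
      _ ≤ 2 ^ d := Nat.pow_le_pow_right (by norm_num) hd
  have hl : 1 ≤ ℓ := le_max_left _ _
  -- P1 : ε < 2 * (2⁻¹)^ℓ
  have P1 : ε < 2 * (2⁻¹ : ℝ) ^ ℓ := by
    rcases le_or_gt (Nat.log 2 z) 1 with hlog | hlog
    · have hℓ1 : ℓ = 1 := by rw [hldef, Nat.max_eq_left hlog]
      rw [hℓ1]
      norm_num
      linarith
    · have hℓlog : ℓ = Nat.log 2 z := by rw [hldef, Nat.max_eq_right (by omega)]
      have h2l : (2:ℕ) ^ ℓ ≤ z := by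
        rw [hℓlog]
        exact Nat.pow_log_le_self 2 (by omega)
      have h2lr : ((2:ℝ) ^ ℓ) ≤ ε⁻¹ := by
        have h1 : ((2 ^ ℓ : ℕ) : ℝ) ≤ (z : ℝ) := by exact_mod_cast h2l
        have h2 : (z : ℝ) ≤ ε⁻¹ := Nat.floor_le (by positivity)
        push_cast at h1
        linarith
      have hεle : ε ≤ ((2:ℝ) ^ ℓ)⁻¹ := by
        rw [← inv_inv ε]
        exact inv_anti₀ (by positivity) h2lr
      have : ((2:ℝ) ^ ℓ)⁻¹ = (2⁻¹ : ℝ) ^ ℓ := by rw [← inv_pow]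
      rw [this] at hεle
      have hpl : (0:ℝ) < (2⁻¹ : ℝ) ^ ℓ := by positivity
      linarith
  -- P2 : ε⁻¹ < 2^(ℓ+1)
  have P2 : ε⁻¹ < (2:ℝ) ^ (ℓ + 1) := by
    have h1 : z < 2 ^ (Nat.log 2 z + 1) := Nat.lt_pow_succ_log_self (by norm_num) z
    have h2 : Nat.log 2 z ≤ ℓ := le_max_right _ _
    have h3 : (2:ℕ) ^ (Nat.log 2 z + 1) ≤ 2 ^ (ℓ + 1) := Nat.pow_le_pow_right (by norm_num) (by omega)
    have h4 : z + 1 ≤ 2 ^ (ℓ + 1) := by omega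
    have h5 : ε⁻¹ < (z : ℝ) + 1 := Nat.lt_floor_add_one ε⁻¹
    have h6 : ((z : ℝ) + 1) ≤ ((2 ^ (ℓ + 1) : ℕ) : ℝ) := by exact_mod_cast h4
    push_cast at h6
    linarith
  -- m ≤ n
  have hm0 : 0 < m := by rw [hmdef]; exact pow_pos (by omega) ℓ
  have hmn : m ≤ n := by
    have hmr : (m : ℝ) = ((2:ℝ) ^ ℓ) ^ d := by
      rw [hmdef, hqdef]
      push_cast
      rw [← pow_mul, ← pow_mul, Nat.mul_comm]
    have h2l : (2:ℝ) ^ ℓ ≤ 2 * ε⁻¹ := by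
      have hεmul : ε * (2:ℝ) ^ ℓ < 2 := by
        have hpl : (0:ℝ) < (2:ℝ) ^ ℓ := by positivity
        have he : (2⁻¹ : ℝ) ^ ℓ * (2:ℝ) ^ ℓ = 1 := by
          rw [← mul_pow]
          norm_num
        nlinarith [P1]
      rw [show (2:ℝ) * ε⁻¹ = 2 / ε from (div_eq_mul_inv 2 ε).symm]
      rw [le_div_iff₀ hε0]
      nlinarith
    have hchain : (m : ℝ) ≤ ((1:ℝ)/2) ^ d * n := by
      calc (m : ℝ) = ((2:ℝ) ^ ℓ) ^ d := hmr
        _ ≤ (2 * ε⁻¹) ^ d := pow_le_pow_left₀ (by positivity) h2l d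
        _ = 2 ^ d * ε⁻¹ ^ d := mul_pow _ _ _
        _ ≤ 2 ^ d * ((1/4 : ℝ) ^ d * n) := by
            apply mul_le_mul_of_nonneg_left hcn (by positivity)
        _ = ((1:ℝ)/2) ^ d * n := by
            rw [← mul_assoc, ← mul_pow]
            norm_num
    have hhalf : ((1:ℝ)/2) ^ d * n ≤ n := by
      have h1 : ((1:ℝ)/2) ^ d ≤ 1 := pow_le_one₀ (by norm_num) (by norm_num)
      nlinarith [Nat.cast_nonneg (α := ℝ) n]
    have : (m : ℝ) ≤ (n : ℝ) := le_trans hchain hhalf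
    exact_mod_cast this
  have hn0 : 0 < n := lt_of_lt_of_le hm0 hmn
  refine ⟨DD q ℓ m n, DD_nonneg q ℓ m n, DD_eq_zero_iff q ℓ m n, DD_symm q ℓ m n,
    DD_ultra q ℓ m n, fun x r => doubling hq x r, ?_⟩
  intro E _ _ hspan T _ hTmin
  -- spanner lower bound
  have h1 : (m : ℝ) ^ 2 / 4 ≤ graphWeight (DD q ℓ m n) E :=
    spanner_lower hq hl hmdef hmn hε0.le P1 E hspan
  -- MST upper bound
  have h2 : graphWeight (DD q ℓ m n) T.Adj ≤ 6 * m * (2⁻¹ : ℝ) ^ ℓ := by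
    calc graphWeight (DD q ℓ m n) T.Adj
        ≤ graphWeight (DD q ℓ m n) (SimpleGraph.pathGraph n).Adj :=
          hTmin _ (pathGraph_isTree hn0)
      _ ≤ ∑ j ∈ Finset.range (n - 1), (2⁻¹ : ℝ) ^ (fd q ℓ m n j (j + 1)) := gw_path_le q ℓ m n
      _ ≤ 6 * m * (2⁻¹ : ℝ) ^ ℓ := W_le hq hl hmdef hmn
  have h3 : 0 ≤ graphWeight (DD q ℓ m n) T.Adj := gw_nonneg _ (DD_nonneg q ℓ m n) _
  -- final arithmetic
  set c₂ : ℝ := (2⁻¹ : ℝ) ^ (d + 1) / 24 with hc2def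
  have hc2pos : 0 < c₂ := by rw [hc2def]; positivity
  have hεipow : ε⁻¹ ^ (d + 1) ≤ ((2:ℝ) ^ (ℓ + 1)) ^ (d + 1) :=
    pow_le_pow_left₀ (by positivity) P2.le _
  have hAm : ((2:ℝ) ^ ℓ) ^ d = (m : ℝ) := by
    rw [hmdef, hqdef]
    push_cast
    rw [← pow_mul, ← pow_mul, Nat.mul_comm]
  have hkey : c₂ * ((2:ℝ) ^ (ℓ + 1)) ^ (d + 1) * (6 * m * (2⁻¹ : ℝ) ^ ℓ) = (m : ℝ) ^ 2 / 4 := by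
    have he : ((2:ℝ) ^ (ℓ + 1)) ^ (d + 1) = (2:ℝ) ^ (d + 1) * ((2:ℝ) ^ ℓ) ^ d * (2:ℝ) ^ ℓ := by
      rw [show (2:ℝ) ^ (ℓ + 1) = 2 * (2:ℝ) ^ ℓ by rw [pow_succ]; ring]
      rw [mul_pow, pow_succ]
      ring
    have e1 : (2⁻¹:ℝ) ^ (d + 1) * (2:ℝ) ^ (d + 1) = 1 := by rw [← mul_pow]; norm_num
    have e2 : (2⁻¹:ℝ) ^ ℓ * (2:ℝ) ^ ℓ = 1 := by rw [← mul_pow]; norm_num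
    rw [hc2def, he, hAm]
    calc (2⁻¹:ℝ) ^ (d + 1) / 24 * ((2:ℝ) ^ (d + 1) * (m:ℝ) * (2:ℝ) ^ ℓ) * (6 * m * (2⁻¹ : ℝ) ^ ℓ)
        = ((2⁻¹:ℝ) ^ (d + 1) * (2:ℝ) ^ (d + 1)) * ((2⁻¹:ℝ) ^ ℓ * (2:ℝ) ^ ℓ) *
            ((m:ℝ) * m) * (6 / 24) := by ring
      _ = (m : ℝ) ^ 2 / 4 := by rw [e1, e2]; ring
  calc c₂ * ε⁻¹ ^ (d + 1) * graphWeight (DD q ℓ m n) T.Adj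
      ≤ c₂ * ε⁻¹ ^ (d + 1) * (6 * m * (2⁻¹ : ℝ) ^ ℓ) := by
        apply mul_le_mul_of_nonneg_left h2
        positivity
    _ ≤ c₂ * ((2:ℝ) ^ (ℓ + 1)) ^ (d + 1) * (6 * m * (2⁻¹ : ℝ) ^ ℓ) := by
        apply mul_le_mul_of_nonneg_right _ (by positivity)
        exact mul_le_mul_of_nonneg_left hεipow hc2pos.le
    _ = (m : ℝ) ^ 2 / 4 := hkey
    _ ≤ graphWeight (DD q ℓ m n) E := h1
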